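/- arXiv:1304.0403 — 2 statements merged into one kernel-verified Lean document; each statement's English description precedes it below -/
import Mathlib

section
/- Suppose the global symmetric positive semidefinite matrix A is assembled from local symmetric positive semidefinite matrices: A = sum_{E} R_E^T A_E R_E, each carrying a 2x2 block structure compatible with the global partitioning, and suppose each local matrix A_E satisfies the strengthened CBS inequality with local constant gamma_E < 1. Then the global CBS constant gamma satisfies gamma <= max_E gamma_E < 1. -/
open Matrix Real in
/-- The global CBS constant is bounded by the maximum of the local CBS constants:
if the global SPSD matrix is assembled from local SPSD matrices via block-compatible
restriction matrices, and each local matrix satisfies the strengthened CBS inequality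
with constant `γE E < 1`, then the global matrix satisfies the CBS inequality with
constant `max_E γE E < 1`. -/
theorem global_cbs_le_max_local_cbs
    {ι : Type*} [Fintype ι] [Nonempty ι] {n1 n2 : ℕ} {m1 m2 : ι → ℕ}
    (A11 : Matrix (Fin n1) (Fin n1) ℝ) (A12 : Matrix (Fin n1) (Fin n2) ℝ)
    (A21 : Matrix (Fin n2) (Fin n1) ℝ) (A22 : Matrix (Fin n2) (Fin n2) ℝ)
    (AE : ∀ E : ι, Matrix (Fin (m1 E) ⊕ Fin (m2 E)) (Fin (m1 E) ⊕ Fin (m2 E)) ℝ)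
    (R1 : ∀ E : ι, Matrix (Fin (m1 E)) (Fin n1) ℝ)
    (R2 : ∀ E : ι, Matrix (Fin (m2 E)) (Fin n2) ℝ)
    (hassemble : Matrix.fromBlocks A11 A12 A21 A22 =
      ∑ E : ι, (Matrix.fromBlocks (R1 E) 0 0 (R2 E))ᵀ * AE E *
        Matrix.fromBlocks (R1 E) 0 0 (R2 E))
    (hApsd : (Matrix.fromBlocks A11 A12 A21 A22).PosSemidef)
    (hAEpsd : ∀ E, (AE E).PosSemidef)
    (γE : ι → ℝ) (hγE0 : ∀ E, 0 ≤ γE E) (hγE1 : ∀ E, γE E < 1)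
    (hlocalCBS : ∀ E (v1 : Fin (m1 E) → ℝ) (v2 : Fin (m2 E) → ℝ),
      |v1 ⬝ᵥ (AE E).toBlocks₁₂ *ᵥ v2| ≤
        γE E * sqrt (v1 ⬝ᵥ (AE E).toBlocks₁₁ *ᵥ v1) * sqrt (v2 ⬝ᵥ (AE E).toBlocks₂₂ *ᵥ v2)) :
    (∀ (v1 : Fin n1 → ℝ) (v2 : Fin n2 → ℝ),
      |v1 ⬝ᵥ A12 *ᵥ v2| ≤ (Finset.univ.sup' Finset.univ_nonempty γE) *
        sqrt (v1 ⬝ᵥ A11 *ᵥ v1) * sqrt (v2 ⬝ᵥ A22 *ᵥ v2)) ∧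
    Finset.univ.sup' Finset.univ_nonempty γE < 1 := by
  set γ := Finset.univ.sup' Finset.univ_nonempty γE with hγ
  have hγlt : γ < 1 := by
    rw [hγ, Finset.sup'_lt_iff]
    exact fun E _ => hγE1 E
  have hγnn : 0 ≤ γ := by
    obtain ⟨E⟩ := ‹Nonempty ι›
    exact (hγE0 E).trans (Finset.le_sup' γE (Finset.mem_univ E))
  refine ⟨fun v1 v2 => ?_, hγlt⟩
  -- rewrite each summand in block form
  have key : ∀ E : ι, (Matrix.fromBlocks (R1 E) 0 0 (R2 E))ᵀ * AE E *
      Matrix.fromBlocks (R1 E) 0 0 (R2 E) =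
      Matrix.fromBlocks
        ((R1 E)ᵀ * (AE E).toBlocks₁₁ * R1 E) ((R1 E)ᵀ * (AE E).toBlocks₁₂ * R2 E)
        ((R2 E)ᵀ * (AE E).toBlocks₂₁ * R1 E) ((R2 E)ᵀ * (AE E).toBlocks₂₂ * R2 E) := by
    intro E
    conv_lhs => rw [← Matrix.fromBlocks_toBlocks (AE E)]
    rw [Matrix.fromBlocks_transpose, Matrix.fromBlocks_multiply, Matrix.fromBlocks_multiply]
    simp
  rw [Finset.sum_congr rfl fun E _ => key E] at hassemble
  have h11 : A11 = ∑ E : ι, (R1 E)ᵀ * (AE E).toBlocks₁₁ * R1 E := by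
    have := congrArg Matrix.toBlocks₁₁ hassemble
    rw [Matrix.toBlocks_fromBlocks₁₁] at this
    rw [this]; ext i j
    simp [Matrix.toBlocks₁₁, Matrix.sum_apply]
  have h12 : A12 = ∑ E : ι, (R1 E)ᵀ * (AE E).toBlocks₁₂ * R2 E := by
    have := congrArg Matrix.toBlocks₁₂ hassemble
    rw [Matrix.toBlocks_fromBlocks₁₂] at this
    rw [this]; ext i j
    simp [Matrix.toBlocks₁₂, Matrix.sum_apply]
  have h22 : A22 = ∑ E : ι, (R2 E)ᵀ * (AE E).toBlocks₂₂ * R2 E := by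
    have := congrArg Matrix.toBlocks₂₂ hassemble
    rw [Matrix.toBlocks_fromBlocks₂₂] at this
    rw [this]; ext i j
    simp [Matrix.toBlocks₂₂, Matrix.sum_apply]
  -- abbreviations for local quadratic forms
  set a : ι → ℝ := fun E => (R1 E *ᵥ v1) ⬝ᵥ (AE E).toBlocks₁₁ *ᵥ (R1 E *ᵥ v1) with ha
  set b : ι → ℝ := fun E => (R2 E *ᵥ v2) ⬝ᵥ (AE E).toBlocks₂₂ *ᵥ (R2 E *ᵥ v2) with hb
  have hanonneg : ∀ E, 0 ≤ a E := by
    intro E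
    have := (hAEpsd E).dotProduct_mulVec_nonneg (Sum.elim (R1 E *ᵥ v1) 0)
    simpa [ha, Matrix.toBlocks₁₁, dotProduct, Matrix.mulVec, Fintype.sum_sum_type] using this
  have hbnonneg : ∀ E, 0 ≤ b E := by
    intro E
    have := (hAEpsd E).dotProduct_mulVec_nonneg (Sum.elim 0 (R2 E *ᵥ v2))
    simpa [hb, Matrix.toBlocks₂₂, dotProduct, Matrix.mulVec, Fintype.sum_sum_type] using this
  have hlin : ∀ {k l : ℕ} (M : ι → Matrix (Fin k) (Fin l) ℝ) (u : Fin k → ℝ) (w : Fin l → ℝ),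
      u ⬝ᵥ (∑ E : ι, M E) *ᵥ w = ∑ E : ι, u ⬝ᵥ M E *ᵥ w := by
    intro k l M u w
    have h1 : (∑ E : ι, M E) *ᵥ w = ∑ E : ι, M E *ᵥ w :=
      map_sum (AddMonoidHom.mk' (fun A : Matrix (Fin k) (Fin l) ℝ => A *ᵥ w)
        (fun A B => Matrix.add_mulVec A B w)) M Finset.univ
    have h2 : u ⬝ᵥ (∑ E : ι, M E *ᵥ w) = ∑ E : ι, u ⬝ᵥ M E *ᵥ w :=
      map_sum (AddMonoidHom.mk' (fun x : Fin k → ℝ => u ⬝ᵥ x)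
        (fun x y => dotProduct_add u x y)) _ Finset.univ
    rw [h1, h2]
  have hdot : ∀ {p q k l : ℕ} (B : Matrix (Fin k) (Fin p) ℝ) (C : Matrix (Fin k) (Fin l) ℝ)
      (D : Matrix (Fin l) (Fin q) ℝ) (u : Fin p → ℝ) (w : Fin q → ℝ),
      u ⬝ᵥ (Bᵀ * C * D) *ᵥ w = (B *ᵥ u) ⬝ᵥ C *ᵥ (D *ᵥ w) := by
    intro p q k l B C D u w
    rw [← Matrix.mulVec_mulVec, ← Matrix.mulVec_mulVec, Matrix.dotProduct_mulVec,
      Matrix.vecMul_transpose]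
  have hsum12 : v1 ⬝ᵥ A12 *ᵥ v2 =
      ∑ E : ι, (R1 E *ᵥ v1) ⬝ᵥ (AE E).toBlocks₁₂ *ᵥ (R2 E *ᵥ v2) := by
    rw [h12, hlin]
    exact Finset.sum_congr rfl fun E _ => hdot _ _ _ _ _
  have hsum11 : v1 ⬝ᵥ A11 *ᵥ v1 = ∑ E : ι, a E := by
    rw [h11, hlin]
    exact Finset.sum_congr rfl fun E _ => hdot _ _ _ _ _
  have hsum22 : v2 ⬝ᵥ A22 *ᵥ v2 = ∑ E : ι, b E := by
    rw [h22, hlin]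
    exact Finset.sum_congr rfl fun E _ => hdot _ _ _ _ _
  calc |v1 ⬝ᵥ A12 *ᵥ v2|
      ≤ ∑ E : ι, |(R1 E *ᵥ v1) ⬝ᵥ (AE E).toBlocks₁₂ *ᵥ (R2 E *ᵥ v2)| := by
        rw [hsum12]; exact Finset.abs_sum_le_sum_abs _ _
    _ ≤ ∑ E : ι, γ * (sqrt (a E) * sqrt (b E)) := by
        refine Finset.sum_le_sum fun E _ => ?_
        refine (hlocalCBS E _ _).trans ?_
        rw [mul_assoc]
        refine mul_le_mul_of_nonneg_right ?_ (by positivity)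
        exact Finset.le_sup' γE (Finset.mem_univ E)
    _ = γ * ∑ E : ι, sqrt (a E) * sqrt (b E) := by rw [Finset.mul_sum]
    _ ≤ γ * (sqrt (∑ E : ι, a E) * sqrt (∑ E : ι, b E)) := by
        refine mul_le_mul_of_nonneg_left ?_ hγnn
        exact Real.sum_sqrt_mul_sqrt_le _ hanonneg hbnonneg
    _ = γ * sqrt (v1 ⬝ᵥ A11 *ᵥ v1) * sqrt (v2 ⬝ᵥ A22 *ᵥ v2) := by
        rw [hsum11, hsum22, mul_assoc]
end

section
/- For a 2x2 block symmetric positive definite matrix A=[[A11,A12],[A21,A22]] with CBS constant gamma < 1, the minimal generalized eigenvalue of the Schur complement S = A22 - A21 A11^{-1} A12 with respect to A22 satisfies lambda_min(A22^{-1} S) >= 1 - gamma^2. -/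
open Matrix Real in
/-- The minimal generalized eigenvalue of the Schur complement `S = A22 - A21 A11⁻¹ A12`
with respect to `A22` is at least `1 - γ²`, where `γ < 1` is the CBS constant: for all
`v2`, `v2ᵀ S v2 ≥ (1 - γ²) v2ᵀ A22 v2`. -/
theorem schur_complement_min_eigenvalue_cbs
    {n1 n2 : ℕ} (A11 : Matrix (Fin n1) (Fin n1) ℝ) (A12 : Matrix (Fin n1) (Fin n2) ℝ)
    (A21 : Matrix (Fin n2) (Fin n1) ℝ) (A22 : Matrix (Fin n2) (Fin n2) ℝ)
    (h11 : A11.PosDef) (h22 : A22.PosDef) (h21 : A21 = A12ᵀ)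
    (γ : ℝ) (hγ0 : 0 ≤ γ) (hγ1 : γ < 1)
    (hCBS : ∀ (v1 : Fin n1 → ℝ) (v2 : Fin n2 → ℝ),
      |v1 ⬝ᵥ A12 *ᵥ v2| ≤ γ * sqrt (v1 ⬝ᵥ A11 *ᵥ v1) * sqrt (v2 ⬝ᵥ A22 *ᵥ v2)) :
    ∀ v2 : Fin n2 → ℝ,
      (1 - γ^2) * (v2 ⬝ᵥ A22 *ᵥ v2) ≤ v2 ⬝ᵥ (A22 - A21 * A11⁻¹ * A12) *ᵥ v2 := by
  intro v2
  have hinv : A11 * A11⁻¹ = 1 :=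
    Matrix.mul_nonsing_inv _ (isUnit_iff_ne_zero.mpr h11.det_pos.ne')
  set w : Fin n1 → ℝ := A11⁻¹ *ᵥ (A12 *ᵥ v2) with hw
  have hAw : A11 *ᵥ w = A12 *ᵥ v2 := by
    rw [hw, Matrix.mulVec_mulVec, hinv, Matrix.one_mulVec]
  set t : ℝ := w ⬝ᵥ A11 *ᵥ w with ht
  set s : ℝ := v2 ⬝ᵥ A22 *ᵥ v2 with hs
  have hquad : v2 ⬝ᵥ (A21 * A11⁻¹ * A12) *ᵥ v2 = t := by
    rw [h21, ht, ← Matrix.mulVec_mulVec, ← Matrix.mulVec_mulVec, ← hw,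
      Matrix.dotProduct_mulVec, Matrix.vecMul_transpose, ← hAw,
      dotProduct_comm]
  have ht0 : 0 ≤ t := by simpa using h11.posSemidef.dotProduct_mulVec_nonneg w
  have hs0 : 0 ≤ s := by simpa using h22.posSemidef.dotProduct_mulVec_nonneg v2
  have hcbs := hCBS w v2
  rw [hAw.symm, ← ht, ← hs] at hcbs
  have habs : t ≤ γ * Real.sqrt t * Real.sqrt s := le_trans (le_abs_self t) hcbs
  have key : t ≤ γ ^ 2 * s := by
    rcases eq_or_lt_of_le ht0 with h0 | h0
    · nlinarith [mul_nonneg hγ0 (mul_nonneg hγ0 hs0)]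
    · have hst : Real.sqrt t ≤ γ * Real.sqrt s := by
        have hsq : Real.sqrt t * Real.sqrt t = t := Real.mul_self_sqrt ht0
        have hpos : 0 < Real.sqrt t := Real.sqrt_pos.mpr h0
        nlinarith
      have := mul_le_mul hst hst (Real.sqrt_nonneg t)
        (mul_nonneg hγ0 (Real.sqrt_nonneg s))
      rw [Real.mul_self_sqrt ht0] at this
      nlinarith [Real.sq_sqrt hs0, Real.sqrt_nonneg s]
  have hexp : v2 ⬝ᵥ (A22 - A21 * A11⁻¹ * A12) *ᵥ v2 = s - t := by
    rw [Matrix.sub_mulVec, dotProduct_sub, hquad, hs]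
  rw [hexp]
  nlinarith
end
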